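/- Let b > 0 and ε > 0. For u ∈ H²(ℝ⁺) ∩ H¹(ℝ⁺) and v ∈ ℝ with v = √(ε/2)·u(0), define A(u,v) = (-b u' - (bε/2) u'', -b √(ε/2) u'(0)). Then ⟨A(u,v), (u,v)⟩ = (b/2) u(0)² + (bε/2) ∫₀^∞ |u'(x)|² dx ≥ 0, i.e., A is accretive on L²(ℝ⁺) × ℝ. -/

import Mathlib

open MeasureTheory Set

/-- Accretivity of the advection-diffusion operator with absorbing boundary condition:
for `(u,v)` in the domain (`u ∈ H²(ℝ⁺)`, `v = √(ε/2) u(0)`),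
`⟨A(u,v),(u,v)⟩ = (b/2) u(0)² + (bε/2) ∫₀^∞ |u'|² ≥ 0`. -/
theorem stmt4 (b ε : ℝ) (hb : 0 < b) (hε : 0 < ε)
    (u u' u'' : ℝ → ℝ)
    (hu' : ∀ x ∈ Set.Ici (0:ℝ), HasDerivAt u (u' x) x)
    (hu'' : ∀ x ∈ Set.Ici (0:ℝ), HasDerivAt u' (u'' x) x)
    (hI0 : IntegrableOn (fun x => (u x)^2) (Set.Ioi 0))
    (hI1 : IntegrableOn (fun x => u x * u' x) (Set.Ioi 0))
    (hI2 : IntegrableOn (fun x => u x * u'' x) (Set.Ioi 0))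
    (hI3 : IntegrableOn (fun x => (u' x)^2) (Set.Ioi 0))
    (hlim1 : Filter.Tendsto (fun x => u x * u x) Filter.atTop (nhds 0))
    (hlim2 : Filter.Tendsto (fun x => u x * u' x) Filter.atTop (nhds 0))
    (v : ℝ) (hv : v = Real.sqrt (ε/2) * u 0) :
    (∫ x in Set.Ioi (0:ℝ), (-b * u' x - (b*ε/2) * u'' x) * u x)
        + (-(b * Real.sqrt (ε/2) * u' 0)) * v
      = (b/2) * (u 0)^2 + (b*ε/2) * ∫ x in Set.Ioi (0:ℝ), (u' x)^2 ∧
    0 ≤ (b/2) * (u 0)^2 + (b*ε/2) * ∫ x in Set.Ioi (0:ℝ), (u' x)^2 := by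
  have hsq : Real.sqrt (ε/2) * Real.sqrt (ε/2) = ε/2 :=
    Real.mul_self_sqrt (by linarith)
  -- integration by parts 1: ∫ 2 u u' = - u(0)^2
  have key1 : ∫ x in Set.Ioi (0:ℝ), 2 * (u x * u' x) = 0 - u 0 * u 0 := by
    apply integral_Ioi_of_hasDerivAt_of_tendsto (f := fun x => u x * u x)
      (f' := fun x => 2 * (u x * u' x)) (m := 0)
    · exact ((hu' 0 (Set.self_mem_Ici)).continuousAt.continuousWithinAt.mul
        (hu' 0 (Set.self_mem_Ici)).continuousAt.continuousWithinAt)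
    · intro x hx
      have h := (hu' x (Set.mem_Ici.mpr (le_of_lt hx))).mul (hu' x (Set.mem_Ici.mpr (le_of_lt hx)))
      convert h using 1
      · exact rfl
      · exact rfl
      · ring
    · exact (hI1.const_mul 2)
    · exact hlim1
  -- integration by parts 2: ∫ (u'^2 + u u'') = - u(0) u'(0)
  have key2 : ∫ x in Set.Ioi (0:ℝ), ((u' x)^2 + u x * u'' x) = 0 - u 0 * u' 0 := by
    apply integral_Ioi_of_hasDerivAt_of_tendsto (f := fun x => u x * u' x)
      (f' := fun x => (u' x)^2 + u x * u'' x) (m := 0)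
    · exact ((hu' 0 (Set.self_mem_Ici)).continuousAt.continuousWithinAt.mul
        (hu'' 0 (Set.self_mem_Ici)).continuousAt.continuousWithinAt)
    · intro x hx
      have h := (hu' x (Set.mem_Ici.mpr (le_of_lt hx))).mul (hu'' x (Set.mem_Ici.mpr (le_of_lt hx)))
      convert h using 1
      · exact rfl
      · exact rfl
      · ring
    · exact hI3.add hI2
    · exact hlim2
  have e1 : ∫ x in Set.Ioi (0:ℝ), u x * u' x = -(u 0 * u 0) / 2 := by
    have := key1
    rw [integral_const_mul] at this
    linarith
  have e2 : ∫ x in Set.Ioi (0:ℝ), u x * u'' x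
      = -(u 0 * u' 0) - ∫ x in Set.Ioi (0:ℝ), (u' x)^2 := by
    have := key2
    rw [integral_add hI3 hI2] at this
    linarith
  have split : ∫ x in Set.Ioi (0:ℝ), (-b * u' x - (b*ε/2) * u'' x) * u x
      = (-b) * (∫ x in Set.Ioi (0:ℝ), u x * u' x)
        + (-(b*ε/2)) * (∫ x in Set.Ioi (0:ℝ), u x * u'' x) := by
    rw [← integral_const_mul, ← integral_const_mul,
      ← integral_add (hI1.const_mul _) (hI2.const_mul _)]
    apply setIntegral_congr_fun measurableSet_Ioi
    intro x _; ring
  constructor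
  · rw [split, e1, e2, hv]
    linear_combination (-(b * u' 0 * u 0)) * hsq
  · have h1 : 0 ≤ (b/2) * (u 0)^2 := by positivity
    have h2 : 0 ≤ ∫ x in Set.Ioi (0:ℝ), (u' x)^2 :=
      integral_nonneg fun x => sq_nonneg _
    have h3 : 0 ≤ b*ε/2 := by positivity
    nlinarith
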